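/- For Motif (k) with Δ₁ = μ₁F̄ − Ē > 0, consider the limit curve φ_∞(Y₂) = (1+μ₂)Y₂ + μ₂δ₁(Δ̄₁ − Y₂)Y₂/(η₂Ē/μ₁) + Y₂/(δ₂(Δ̄₁ − Y₂)) on [0, Δ̄₁), where Δ̄₁ = Δ₁/μ₁. Let β = μ₁μ₂δ₁/(η₂Ē) and Δ₂ = 27μ₁μ₂²δ₁²η₂Ē(μ₁F̄ − Ē) − δ₂(δ₁μ₂μ₁F̄ − (μ₂δ₁ + η₂(1+μ₂))Ē)³. If Δ₂ < 0, then there exists Y₂ ∈ (0, Δ̄₁) with φ_∞'(Y₂) < 0. -/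
import Mathlib


set_option maxHeartbeats 1000000
open Set

/-- Motif (k) with `Δ₁ = μ₁F̄ − Ē > 0`: for the limit curve `φ_∞` of the
steady-state function as `S̄ → ∞`, if `Δ₂ < 0` then `φ_∞` is decreasing
somewhere on `(0, Δ̄₁)`, where `Δ̄₁ = Δ₁/μ₁`. -/
theorem motif_k_limit_curve_decreasing (η₂ δ₁ δ₂ μ₁ μ₂ Ebar Fbar : ℝ)
    (hη₂ : 0 < η₂) (hδ₁ : 0 < δ₁) (hδ₂ : 0 < δ₂)
    (hμ₁ : 0 < μ₁) (hμ₂ : 0 < μ₂) (hE : 0 < Ebar) (hF : 0 < Fbar)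
    (hΔ₁ : 0 < μ₁ * Fbar - Ebar)
    (hΔ₂ : 27 * μ₁ * μ₂ ^ 2 * δ₁ ^ 2 * η₂ * Ebar * (μ₁ * Fbar - Ebar) -
      δ₂ * (δ₁ * μ₂ * μ₁ * Fbar -
        (μ₂ * δ₁ + η₂ * (1 + μ₂)) * Ebar) ^ 3 < 0) :
    let Δbar₁ : ℝ := (μ₁ * Fbar - Ebar) / μ₁
    let φinf : ℝ → ℝ := fun Y₂ =>
      (1 + μ₂) * Y₂ + μ₂ * δ₁ * (Δbar₁ - Y₂) * Y₂ / (η₂ * Ebar / μ₁) +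
        Y₂ / (δ₂ * (Δbar₁ - Y₂))
    ∃ Y₂ ∈ Ioo 0 Δbar₁, deriv φinf Y₂ < 0 := by
  intro D φinf
  have hDdef : D = (μ₁ * Fbar - Ebar) / μ₁ := rfl
  clear_value D
  set β : ℝ := μ₁ * μ₂ * δ₁ / (η₂ * Ebar) with hβdef
  clear_value β
  have hβ : 0 < β := by rw [hβdef]; positivity
  have hD : 0 < D := by rw [hDdef]; positivity
  set A : ℝ := β * D - (1 + μ₂) with hAdef
  clear_value A
  -- key inequality from hΔ₂
  have hkey : 27 * β ^ 2 * D < δ₂ * A ^ 3 := by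
    have hEη : (0:ℝ) < η₂ * Ebar := by positivity
    have hid : (η₂ * Ebar) ^ 3 * μ₁ * (δ₂ * A ^ 3 - 27 * β ^ 2 * D) =
        μ₁ * (δ₂ * (δ₁ * μ₂ * μ₁ * Fbar -
          (μ₂ * δ₁ + η₂ * (1 + μ₂)) * Ebar) ^ 3 -
          27 * μ₁ * μ₂ ^ 2 * δ₁ ^ 2 * η₂ * Ebar * (μ₁ * Fbar - Ebar)) := by
      rw [hAdef, hβdef, hDdef]
      field_simp
      ring
    nlinarith [mul_pos (mul_pos (pow_pos hEη 3) hμ₁) (sub_pos.mpr (show (0:ℝ) < 1 from one_pos)), pow_pos hEη 3, mul_pos (pow_pos hEη 3) hμ₁]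
  have hA : 0 < A := by
    by_contra h
    push_neg at h
    have h3 : A ^ 3 ≤ 0 := by nlinarith [sq_nonneg A]
    nlinarith [mul_pos (mul_pos (by norm_num : (0:ℝ) < 27) (pow_pos hβ 2)) hD]
  set x : ℝ := A / (3 * β) with hxdef
  clear_value x
  have hx : 0 < x := by rw [hxdef]; positivity
  have hxD : x < D := by
    rw [hxdef, div_lt_iff₀ (by positivity)]
    nlinarith
  refine ⟨D - x, ⟨by linarith, by linarith⟩, ?_⟩
  have hx0 : D - (D - x) = x := by ring
  have hden : δ₂ * (D - (D - x)) ≠ 0 := by rw [hx0]; positivity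
  have hC : η₂ * Ebar / μ₁ ≠ 0 := by positivity
  -- Derivative
  have h1 : HasDerivAt (fun Y : ℝ => (1 + μ₂) * Y) ((1 + μ₂) * 1) (D - x) :=
    (hasDerivAt_id _).const_mul _
  have h2a : HasDerivAt (fun Y : ℝ => μ₂ * δ₁ * (D - Y)) (μ₂ * δ₁ * (0 - 1)) (D - x) :=
    ((hasDerivAt_const _ D).sub (hasDerivAt_id _)).const_mul _
  have h2 : HasDerivAt (fun Y : ℝ => μ₂ * δ₁ * (D - Y) * Y / (η₂ * Ebar / μ₁))
      ((μ₂ * δ₁ * (0 - 1) * (D - x) + μ₂ * δ₁ * (D - (D - x)) * 1) / (η₂ * Ebar / μ₁))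
      (D - x) := (h2a.mul (hasDerivAt_id _)).div_const _
  have h3a : HasDerivAt (fun Y : ℝ => δ₂ * (D - Y)) (δ₂ * (0 - 1)) (D - x) :=
    ((hasDerivAt_const _ D).sub (hasDerivAt_id _)).const_mul _
  have h3 : HasDerivAt (fun Y : ℝ => Y / (δ₂ * (D - Y)))
      ((1 * (δ₂ * (D - (D - x))) - (D - x) * (δ₂ * (0 - 1))) / (δ₂ * (D - (D - x))) ^ 2)
      (D - x) := (hasDerivAt_id _).div h3a hden
  have hφ : HasDerivAt φinf
      ((1 + μ₂) * 1 +
        (μ₂ * δ₁ * (0 - 1) * (D - x) + μ₂ * δ₁ * (D - (D - x)) * 1) / (η₂ * Ebar / μ₁) +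
        (1 * (δ₂ * (D - (D - x))) - (D - x) * (δ₂ * (0 - 1))) / (δ₂ * (D - (D - x))) ^ 2)
      (D - x) := (h1.add h2).add h3
  rw [hφ.deriv]
  rw [hx0]
  -- value is (1+μ₂) + β*(2x - D) + D/(δ₂ x²) = -A/3 + 9β²D/(δ₂A²)
  have hd : (1 + μ₂) * 1 +
      (μ₂ * δ₁ * (0 - 1) * (D - x) + μ₂ * δ₁ * x * 1) / (η₂ * Ebar / μ₁) +
      (1 * (δ₂ * x) - (D - x) * (δ₂ * (0 - 1))) / (δ₂ * x) ^ 2 =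
      (1 + μ₂) + β * (2 * x - D) + D / (δ₂ * x ^ 2) := by
    rw [hβdef]
    have hx' : x ≠ 0 := hx.ne'
    field_simp
    ring
  rw [hd]
  have hxval : (1 + μ₂) + β * (2 * x - D) = -A / 3 := by
    have hβ' : β ≠ 0 := hβ.ne'
    rw [hxdef, hAdef]; field_simp; ring
  rw [hxval]
  have hx2 : D / (δ₂ * x ^ 2) = 9 * β ^ 2 * D / (δ₂ * A ^ 2) := by
    rw [hxdef]
    have hA' : A ≠ 0 := hA.ne'
    field_simp
    ring
  rw [hx2]
  rw [div_add_div _ _ (by norm_num : (3:ℝ) ≠ 0) (by positivity : δ₂ * A ^ 2 ≠ 0)]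
  apply div_neg_of_neg_of_pos
  · nlinarith [hkey]
  · positivity
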